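/- For every natural number n, the number of derangements of {1,…,n} equals the improper integral ∫_0^∞ (x-1)^n e^{-x} dx; that is, D_n = ∫_0^∞ (x-1)^n e^{-x} dx, where the integral is over the real interval (0,∞). -/

import Mathlib

open MeasureTheory Filter

lemma integrableOn_pow_mul_exp_neg (k : ℕ) :
    IntegrableOn (fun x : ℝ => x ^ k * Real.exp (-x)) (Set.Ioi 0) := by
  have h := Real.GammaIntegral_convergent (s := (k : ℝ) + 1) (by positivity)
  refine h.congr_fun (fun x hx => ?_) measurableSet_Ioi
  simp only [add_sub_cancel_right, Real.rpow_natCast]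
  ring

lemma integrableOn_sub_one_pow_mul_exp_neg (n : ℕ) :
    IntegrableOn (fun x : ℝ => (x - 1) ^ n * Real.exp (-x)) (Set.Ioi 0) := by
  have : IntegrableOn
      (fun x : ℝ => ∑ m ∈ Finset.range (n + 1),
        ((-1 : ℝ) ^ (m + n) * n.choose m) * (x ^ m * Real.exp (-x))) (Set.Ioi 0) := by
    apply MeasureTheory.integrable_finset_sum
    intro m _
    exact (integrableOn_pow_mul_exp_neg m).const_mul _
  refine this.congr_fun (fun x _ => ?_) measurableSet_Ioi
  rw [sub_pow, Finset.sum_mul]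
  beta_reduce
  refine Finset.sum_congr rfl (fun m _ => ?_)
  simp only [one_pow]
  ring

lemma tendsto_aux (n : ℕ) :
    Tendsto (fun x : ℝ => -((x - 1) ^ n * Real.exp (-x))) atTop (nhds 0) := by
  have h1 : Tendsto (fun x : ℝ => x - 1) atTop atTop :=
    tendsto_atTop_add_const_right _ _ tendsto_id
  have h2 : Tendsto (fun x : ℝ => (x - 1) ^ n * Real.exp (-(x - 1))) atTop (nhds 0) :=
    (Real.tendsto_pow_mul_exp_neg_atTop_nhds_zero n).comp h1
  have h3 : Tendsto (fun x : ℝ => Real.exp (-1) * ((x - 1) ^ n * Real.exp (-(x - 1))))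
      atTop (nhds (Real.exp (-1) * 0)) := h2.const_mul _
  rw [mul_zero] at h3
  have h4 := h3.neg
  rw [neg_zero] at h4
  refine h4.congr (fun x => ?_)
  rw [show -x = -1 + -(x - 1) by ring, Real.exp_add]
  ring

lemma integral_recurrence (n : ℕ) :
    (∫ x in Set.Ioi (0 : ℝ), (x - 1) ^ (n + 1) * Real.exp (-x)) =
      (n + 1) * (∫ x in Set.Ioi (0 : ℝ), (x - 1) ^ n * Real.exp (-x)) + (-1) ^ (n + 1) := by
  set f : ℝ → ℝ := fun x => -((x - 1) ^ (n + 1) * Real.exp (-x)) with hf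
  set f' : ℝ → ℝ := fun x =>
    (x - 1) ^ (n + 1) * Real.exp (-x) - (n + 1) * ((x - 1) ^ n * Real.exp (-x)) with hf'
  have hderiv : ∀ x ∈ Set.Ici (0 : ℝ), HasDerivAt f (f' x) x := by
    intro x _
    have h1 : HasDerivAt (fun x : ℝ => (x - 1) ^ (n + 1))
        ((n + 1) * (x - 1) ^ n) x := by
      have := ((hasDerivAt_id x).sub_const 1).fun_pow (n + 1)
      simpa using this
    have h2 : HasDerivAt (fun x : ℝ => Real.exp (-x)) (-Real.exp (-x)) x := by
      simpa using (hasDerivAt_neg x).exp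
    have := (h1.fun_mul h2).fun_neg
    refine this.congr_deriv ?_
    simp only [hf']
    ring
  have hint : IntegrableOn f' (Set.Ioi 0) :=
    (integrableOn_sub_one_pow_mul_exp_neg (n + 1)).sub
      ((integrableOn_sub_one_pow_mul_exp_neg n).const_mul _)
  have htend : Tendsto f atTop (nhds 0) := tendsto_aux (n + 1)
  have key := integral_Ioi_of_hasDerivAt_of_tendsto' hderiv hint htend
  have hsplit : (∫ x in Set.Ioi (0 : ℝ), f' x) =
      (∫ x in Set.Ioi (0 : ℝ), (x - 1) ^ (n + 1) * Real.exp (-x)) -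
        (n + 1) * (∫ x in Set.Ioi (0 : ℝ), (x - 1) ^ n * Real.exp (-x)) := by
    rw [hf', MeasureTheory.integral_sub (integrableOn_sub_one_pow_mul_exp_neg (n + 1))
      ((integrableOn_sub_one_pow_mul_exp_neg n).const_mul _), MeasureTheory.integral_const_mul]
  rw [hsplit] at key
  have hf0 : f 0 = -(-1 : ℝ) ^ (n + 1) := by
    simp [hf]
  rw [hf0] at key
  linarith [key]

lemma numDerangements_eq_integral (n : ℕ) :
    ((numDerangements n : ℝ)) = ∫ x in Set.Ioi (0 : ℝ), (x - 1) ^ n * Real.exp (-x) := by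
  induction n with
  | zero => simp only [numDerangements_zero, Nat.cast_one, pow_zero, one_mul, integral_exp_neg_Ioi_zero]
  | succ n ih =>
    have h := numDerangements_succ n
    have h' : ((numDerangements (n + 1) : ℝ)) = (n + 1) * (numDerangements n : ℝ) - (-1) ^ n := by
      exact_mod_cast congrArg (fun z : ℤ => (z : ℝ)) h
    rw [h', ih, integral_recurrence n, pow_succ]
    ring

/-- The number of derangements of `{1,…,n}` equals the improper integral
`∫_0^∞ (x-1)^n e^{-x} dx`. -/
theorem derangements_eq_integral (n : ℕ) :
    ((Fintype.card {π : Equiv.Perm (Fin n) // ∀ i, π i ≠ i}) : ℝ) =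
      ∫ x in Set.Ioi (0 : ℝ), (x - 1) ^ n * Real.exp (-x) := by
  have hcard : Fintype.card {π : Equiv.Perm (Fin n) // ∀ i, π i ≠ i} = numDerangements n := by
    rw [← card_derangements_fin_eq_numDerangements]
    exact Fintype.card_congr (Equiv.subtypeEquivRight (fun π => Iff.rfl))
  rw [hcard]
  exact numDerangements_eq_integral n
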